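/- Let N ≥ 1, let x : Fin N → ℝ³ be particle positions, let H : Fin N → Finset (Fin N) be the neighbor (horizon) sets with i ∉ H i and x j ≠ x i for every j ∈ H i, let c > 0, let V : Fin N → ℝ be positive volumes, and let μ, ν : Fin N → Fin N → ℝ be correction factors. For a displacement field u : Fin N → ℝ³ set y k = x k + u k and define the total force density on particle i by F_i(u) = Σ_{j ∈ H i} c·μ i j·ν i j·V j·((‖y j − y i‖ − ‖x j − x i‖)/‖x j − x i‖)·(y j − y i)/‖y j − y i‖. Suppose u is such that y j ≠ y i for every i and every j ∈ H i. Then for all i, j and all coordinate indices p, q ∈ {1,2,3}, the partial derivative of the p-th component of F_i with respect to the q-th component of u j exists and equals: (a) c·μ i j·ν i j·V j·( δ_{pq}/‖x j − x i‖ − δ_{pq}/‖y j − y i‖ + (y j − y i)_p (y j − y i)_q /‖y j − y i‖³ ) if j ∈ H i; (b) 0 if j ≠ i and j ∉ H i; and (c) c·Σ_{k ∈ H i} μ i k·ν i k·V k·( δ_{pq}/‖y k − y i‖ − δ_{pq}/‖x k − x i‖ − (y k − y i)_p (y k − y i)_q /‖y k − y i‖³ ) if j = i. -/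

import Mathlib

open scoped RealInnerProductSpace

lemma aux_hasDerivAt_line {E : Type*} [NormedAddCommGroup E] [InnerProductSpace ℝ E]
    (z e : E) : HasDerivAt (fun t : ℝ => z + t • e) e 0 := by
  simpa using ((hasDerivAt_id (0:ℝ)).smul_const e).const_add z

lemma aux_hasDerivAt_norm {E : Type*} [NormedAddCommGroup E] [InnerProductSpace ℝ E]
    (z e : E) (hz : z ≠ 0) :
    HasDerivAt (fun t : ℝ => ‖z + t • e‖) (⟪z, e⟫ / ‖z‖) 0 := by
  have h1 := aux_hasDerivAt_line z e
  have h2 := (h1.inner ℝ h1).sqrt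
    (by rw [real_inner_self_eq_norm_sq]; simpa using pow_ne_zero 2 (norm_ne_zero_iff.2 hz))
  have heq : (fun t : ℝ => Real.sqrt ⟪z + t • e, z + t • e⟫) = fun t : ℝ => ‖z + t • e‖ := by
    funext t
    rw [real_inner_self_eq_norm_sq, Real.sqrt_sq (norm_nonneg _)]
  rw [heq] at h2
  convert h2 using 1
  rw [real_inner_self_eq_norm_sq, Real.sqrt_sq (norm_nonneg _)]
  simp [real_inner_comm]
  ring

lemma aux_key (z e : EuclideanSpace ℝ (Fin 3)) (hz : z ≠ 0) (r C : ℝ) (hr : r ≠ 0) (p : Fin 3) :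
    HasDerivAt (fun t : ℝ => (C * ((‖z + t • e‖ - r) / r) / ‖z + t • e‖) * ((z + t • e) p))
      (C * (e p / r - e p / ‖z‖ + z p * ⟪z, e⟫ / ‖z‖ ^ 3)) 0 := by
  have hn : ‖z‖ ≠ 0 := norm_ne_zero_iff.2 hz
  have hN := aux_hasDerivAt_norm z e hz
  have hcomp : HasDerivAt (fun t : ℝ => (z + t • e) p) (e p) 0 := by
    have h : (fun t : ℝ => (z + t • e) p) = fun t => z p + t * e p := by
      funext t; simp
    rw [h]; simpa using ((hasDerivAt_id (0:ℝ)).mul_const (e p)).const_add (z p)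
  have hA := ((((hN.sub_const r).div_const r).const_mul C).fun_div hN (by simpa using hn)).fun_mul hcomp
  refine hA.congr_deriv ?_
  simp only [zero_smul, add_zero]
  field_simp
  ring


set_option maxHeartbeats 1000000 in
/-- For the discretized bond-based peridynamic total force density
`F_i(u) = Σ_{j ∈ H i} c μ_{ij} ν_{ij} V_j s_{ij} (y_j − y_i)/‖y_j − y_i‖` with `y_k = x_k + u_k`,
at any displacement field `u` with `y j ≠ y i` for all bonds, the partial derivative of the `p`-th
component of `F_i` with respect to the `q`-th component of `u j` exists and is given by the three
case formulas (off-diagonal bonded, off-diagonal unbonded, diagonal). -/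
theorem bbpd_discrete_force_partial_derivatives
    (N : ℕ) (hN : 1 ≤ N)
    (x : Fin N → EuclideanSpace ℝ (Fin 3))
    (H : Fin N → Finset (Fin N))
    (hHi : ∀ i, i ∉ H i)
    (hxne : ∀ i, ∀ j ∈ H i, x j ≠ x i)
    (c : ℝ) (hc : 0 < c)
    (V : Fin N → ℝ) (hV : ∀ j, 0 < V j)
    (μ ν : Fin N → Fin N → ℝ)
    (F : Fin N → (Fin N → EuclideanSpace ℝ (Fin 3)) → EuclideanSpace ℝ (Fin 3))
    (hF : ∀ i w, F i w = ∑ j ∈ H i,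
      (c * μ i j * ν i j * V j *
        ((‖(x j + w j) - (x i + w i)‖ - ‖x j - x i‖) / ‖x j - x i‖) /
        ‖(x j + w j) - (x i + w i)‖) • ((x j + w j) - (x i + w i)))
    (u : Fin N → EuclideanSpace ℝ (Fin 3))
    (y : Fin N → EuclideanSpace ℝ (Fin 3)) (hy : ∀ k, y k = x k + u k)
    (hyne : ∀ i, ∀ j ∈ H i, y j ≠ y i) :
    ∀ (i j : Fin N) (p q : Fin 3),
      (j ∈ H i →
        HasLineDerivAt ℝ (fun w => F i w p)
          (c * μ i j * ν i j * V j *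
            ((if p = q then (1:ℝ) else 0) / ‖x j - x i‖
              - (if p = q then (1:ℝ) else 0) / ‖y j - y i‖
              + (y j - y i) p * (y j - y i) q / ‖y j - y i‖ ^ 3))
          u (Pi.single j (EuclideanSpace.single q 1))) ∧
      (j ≠ i → j ∉ H i →
        HasLineDerivAt ℝ (fun w => F i w p) (0 : ℝ)
          u (Pi.single j (EuclideanSpace.single q 1))) ∧
      (j = i →
        HasLineDerivAt ℝ (fun w => F i w p)
          (c * ∑ k ∈ H i, μ i k * ν i k * V k *
            ((if p = q then (1:ℝ) else 0) / ‖y k - y i‖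
              - (if p = q then (1:ℝ) else 0) / ‖x k - x i‖
              - (y k - y i) p * (y k - y i) q / ‖y k - y i‖ ^ 3))
          u (Pi.single j (EuclideanSpace.single q 1))) := by
  intro i j p q
  set e : EuclideanSpace ℝ (Fin 3) := EuclideanSpace.single q 1 with he
  set v : Fin N → EuclideanSpace ℝ (Fin 3) := Pi.single j e with hv
  have hep : e p = if p = q then (1:ℝ) else 0 := EuclideanSpace.single_apply q 1 p
  have hinner : ∀ z : EuclideanSpace ℝ (Fin 3), ⟪z, e⟫ = z q := by
    intro z; simp [he, EuclideanSpace.inner_single_right]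
  have hvj : ∀ t : ℝ, (u + t • v) j = u j + t • e := by
    intro t; simp [hv, Pi.single_eq_same]
  have hvk : ∀ (k : Fin N), k ≠ j → ∀ t : ℝ, (u + t • v) k = u k := by
    intro k hk t; simp [hv, Pi.single_eq_of_ne hk]
  have hfun : ∀ (w : Fin N → EuclideanSpace ℝ (Fin 3)), F i w p = ∑ k ∈ H i,
      (c * μ i k * ν i k * V k *
        ((‖(x k + w k) - (x i + w i)‖ - ‖x k - x i‖) / ‖x k - x i‖) /
        ‖(x k + w k) - (x i + w i)‖) * (((x k + w k) - (x i + w i)) p) := by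
    intro w
    rw [hF]
    rw [WithLp.ofLp_sum, Finset.sum_apply]
    rfl
  refine ⟨?_, ?_, ?_⟩
  · -- case j ∈ H i
    intro hj
    have hji : j ≠ i := fun h => hHi i (h ▸ hj)
    show HasDerivAt (fun t : ℝ => F i (u + t • v) p) _ 0
    simp only [hfun]
    have key : ∀ k ∈ H i, HasDerivAt
        (fun t : ℝ =>
          (c * μ i k * ν i k * V k *
            ((‖(x k + (u + t • v) k) - (x i + (u + t • v) i)‖ - ‖x k - x i‖) / ‖x k - x i‖) /
            ‖(x k + (u + t • v) k) - (x i + (u + t • v) i)‖) *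
          (((x k + (u + t • v) k) - (x i + (u + t • v) i)) p))
        (if k = j then
          c * μ i j * ν i j * V j *
            ((if p = q then (1:ℝ) else 0) / ‖x j - x i‖
              - (if p = q then (1:ℝ) else 0) / ‖y j - y i‖
              + (y j - y i) p * (y j - y i) q / ‖y j - y i‖ ^ 3)
         else 0) 0 := by
      intro k hk
      by_cases hkj : k = j
      · subst hkj
        rw [if_pos rfl]
        have hd : ∀ t : ℝ, (x k + (u + t • v) k) - (x i + (u + t • v) i)
            = (y k - y i) + t • e := by
          intro t
          rw [hvj t, hvk i (Ne.symm hji) t, hy, hy]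
          abel
        simp only [hd]
        have hz : (y k : EuclideanSpace ℝ (Fin 3)) - y i ≠ 0 := sub_ne_zero.2 (hyne i k hk)
        have hr : ‖x k - x i‖ ≠ 0 := norm_ne_zero_iff.2 (sub_ne_zero.2 (hxne i k hk))
        have h := aux_key (y k - y i) e hz ‖x k - x i‖ (c * μ i k * ν i k * V k) hr p
        convert h using 1
        rw [hep, hinner]
      · simp only [if_neg hkj]
        have hd : ∀ t : ℝ, (x k + (u + t • v) k) - (x i + (u + t • v) i)
            = (x k + u k) - (x i + u i) := by
          intro t
          rw [hvk k hkj t, hvk i (Ne.symm hji) t]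
        simp only [hd]
        exact hasDerivAt_const 0 _
    have hsum := HasDerivAt.fun_sum key
    refine hsum.congr_deriv ?_
    rw [Finset.sum_ite_eq' (H i) j, if_pos hj]
  · -- case j ∉ H i, j ≠ i
    intro hji hj
    show HasDerivAt (fun t : ℝ => F i (u + t • v) p) _ 0
    have hconst : ∀ t : ℝ, F i (u + t • v) p = F i u p := by
      intro t
      rw [hfun, hfun]
      refine Finset.sum_congr rfl fun k hk => ?_
      have hkj : k ≠ j := fun h => hj (h ▸ hk)
      rw [hvk k hkj t, hvk i (Ne.symm hji) t]
    simp only [hconst]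
    exact hasDerivAt_const 0 _
  · -- case j = i
    intro hji
    subst hji
    show HasDerivAt (fun t : ℝ => F j (u + t • v) p) _ 0
    simp only [hfun]
    have key : ∀ k ∈ H j, HasDerivAt
        (fun t : ℝ =>
          (c * μ j k * ν j k * V k *
            ((‖(x k + (u + t • v) k) - (x j + (u + t • v) j)‖ - ‖x k - x j‖) / ‖x k - x j‖) /
            ‖(x k + (u + t • v) k) - (x j + (u + t • v) j)‖) *
          (((x k + (u + t • v) k) - (x j + (u + t • v) j)) p))
        (c * (μ j k * ν j k * V k *
            ((if p = q then (1:ℝ) else 0) / ‖y k - y j‖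
              - (if p = q then (1:ℝ) else 0) / ‖x k - x j‖
              - (y k - y j) p * (y k - y j) q / ‖y k - y j‖ ^ 3))) 0 := by
      intro k hk
      have hkj : k ≠ j := fun h => hHi j (h ▸ hk)
      have hd : ∀ t : ℝ, (x k + (u + t • v) k) - (x j + (u + t • v) j)
          = (y k - y j) + t • (-e) := by
        intro t
        rw [hvk k hkj t, hvj t, hy, hy, smul_neg]
        abel
      simp only [hd]
      have hz : (y k : EuclideanSpace ℝ (Fin 3)) - y j ≠ 0 := sub_ne_zero.2 (hyne j k hk)
      have hr : ‖x k - x j‖ ≠ 0 := norm_ne_zero_iff.2 (sub_ne_zero.2 (hxne j k hk))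
      have h := aux_key (y k - y j) (-e) hz ‖x k - x j‖ (c * μ j k * ν j k * V k) hr p
      convert h using 1
      have hne : (-e : EuclideanSpace ℝ (Fin 3)) p = -(if p = q then (1:ℝ) else 0) := by
        simp [hep]
      have hni : ⟪(y k - y j : EuclideanSpace ℝ (Fin 3)), -e⟫ = -((y k - y j) q) := by
        rw [inner_neg_right, hinner]
      rw [hne, hni]
      simp only [PiLp.sub_apply]
      ring
    have hsum := HasDerivAt.fun_sum key
    refine hsum.congr_deriv ?_
    rw [Finset.mul_sum]
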